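/- Assuming the Maynard–Tao theorem as a hypothesis: if 𝒜 = {a_1 < a_2 < ⋯} is an infinite set of integers and f_𝒜(n) denotes the number of pairs (p, a) with p prime, a ∈ 𝒜, and n = p + a, then limsup_{n→∞} f_𝒜(n) = +∞. -/

import Mathlib

open scoped Classical

open Filter

/-- A finite set of integers is admissible if modulo every prime `p`
it occupies at most `p - 1` residue classes. -/
def IsAdmissible (B : Finset ℤ) : Prop :=
  ∀ p : ℕ, p.Prime → (B.image (fun b => b % (p : ℤ))).card ≤ p - 1

lemma exists_admissible_neg_subset (a : ℕ → ℤ) (ha : StrictMono a) (k : ℕ) :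
    ∃ B : Finset ℤ, B.card = k ∧ IsAdmissible B ∧ ∀ b ∈ B, -b ∈ Set.range a := by
  set M := k.factorial with hM
  haveI : NeZero M := ⟨k.factorial_ne_zero⟩
  obtain ⟨y, hy⟩ := Finite.exists_infinite_fiber (fun i : ℕ => ((a i : ZMod M)))
  have hyinf : ((fun i : ℕ => ((a i : ZMod M))) ⁻¹' {y}).Infinite :=
    Set.infinite_coe_iff.mp hy
  obtain ⟨t, hts, htc⟩ := hyinf.exists_subset_card_eq k
  refine ⟨t.image (fun i => -(a i)), ?_, ?_, ?_⟩
  · rw [Finset.card_image_of_injective _ (fun i j h => ha.injective (neg_injective h)), htc]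
  · -- admissibility
    have hcong : ∀ x ∈ t.image (fun i => -(a i)), ∀ z ∈ t.image (fun i => -(a i)),
        (M : ℤ) ∣ x - z := by
      intro x hx z hz
      simp only [Finset.mem_image] at hx hz
      obtain ⟨i, hi, rfl⟩ := hx
      obtain ⟨j, hj, rfl⟩ := hz
      have h1 : ((a i : ZMod M)) = ((a j : ZMod M)) := by
        have := hts hi; have := hts hj
        simp_all [Set.mem_preimage]
      have h2 : (M : ℤ) ∣ a j - a i := ((ZMod.intCast_eq_intCast_iff _ _ _).mp h1).dvd
      have : -a i - -a j = a j - a i := by ring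
      rw [this]; exact h2
    intro p hp
    rcases le_or_gt p k with hpk | hpk
    · have h1 : (((t.image (fun i => -(a i))).image (fun b => b % (p : ℤ)))).card ≤ 1 := by
        rw [Finset.card_le_one]
        intro u hu v hv
        rw [Finset.mem_image] at hu hv
        obtain ⟨x, hx, rfl⟩ := hu
        obtain ⟨z, hz, rfl⟩ := hv
        have hdM : (p : ℤ) ∣ (M : ℤ) := by
          exact_mod_cast Int.natCast_dvd_natCast.mpr (Nat.dvd_factorial hp.pos hpk)
        have hd : (p : ℤ) ∣ z - x := hdM.trans (hcong z hz x hx)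
        exact Int.ModEq.eq (Int.modEq_iff_dvd.mpr hd)
      have : 1 ≤ p - 1 := by have := hp.two_le; omega
      exact h1.trans this
    · calc ((t.image (fun i => -(a i))).image (fun b => b % (p : ℤ))).card
          ≤ (t.image (fun i => -(a i))).card := Finset.card_image_le
        _ = k := by
            rw [Finset.card_image_of_injective _ (fun i j h => ha.injective (neg_injective h)), htc]
        _ ≤ p - 1 := by omega
  · intro b hb
    simp only [Finset.mem_image] at hb
    obtain ⟨i, _, rfl⟩ := hb
    exact ⟨i, by ring⟩

theorem limsup_representation_function_eq_top
    (maynard_tao : ∀ m : ℕ, 2 ≤ m → ∀ B : Finset ℤ, IsAdmissible B →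
      (B.card : ℝ) * Real.log B.card > Real.exp (8 * m + 4) →
      ∀ N : ℤ, ∃ n : ℤ, N < n ∧
        m ≤ (B.filter (fun b => ∃ p : ℕ, p.Prime ∧ n + b = (p : ℤ))).card)
    (a : ℕ → ℤ) (ha : StrictMono a) :
    Filter.limsup
      (fun n : ℤ =>
        (({q : ℕ × ℤ | q.1.Prime ∧ q.2 ∈ Set.range a ∧ n = (q.1 : ℤ) + q.2}.ncard : ℕ∞)))
      Filter.atTop = ⊤ := by
  set f : ℤ → ℕ∞ := fun n : ℤ =>
    (({q : ℕ × ℤ | q.1.Prime ∧ q.2 ∈ Set.range a ∧ n = (q.1 : ℤ) + q.2}.ncard : ℕ∞)) with hf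
  have key : ∀ m : ℕ, ∀ N : ℤ, ∃ n : ℤ, N < n ∧ (m : ℕ∞) ≤ f n := by
    intro m N
    set m' : ℕ := max 2 m with hm'
    -- choose k
    set k : ℕ := max 3 (⌈Real.exp (8 * m' + 4)⌉₊ + 1) with hk
    obtain ⟨B, hBcard, hBadm, hBneg⟩ := exists_admissible_neg_subset a ha k
    have hsize : (B.card : ℝ) * Real.log B.card > Real.exp (8 * m' + 4) := by
      rw [hBcard]
      have hek : Real.exp (8 * m' + 4) < (k : ℝ) := by
        have h1 : Real.exp (8 * m' + 4) ≤ (⌈Real.exp (8 * m' + 4)⌉₊ : ℝ) := Nat.le_ceil _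
        have h2 : (⌈Real.exp (8 * m' + 4)⌉₊ + 1 : ℕ) ≤ k := le_max_right _ _
        have := (Nat.cast_le (α := ℝ)).mpr h2
        push_cast at this
        linarith
      have hk3 : (3 : ℝ) ≤ (k : ℝ) := by
        exact_mod_cast (Nat.cast_le (α := ℝ)).mpr (le_max_left 3 _)
      have hlog : 1 ≤ Real.log k := by
        rw [Real.le_log_iff_exp_le (by linarith)]
        have := Real.exp_one_lt_d9
        linarith
      calc Real.exp (8 * m' + 4) < (k : ℝ) := hek
        _ = (k : ℝ) * 1 := by ring
        _ ≤ (k : ℝ) * Real.log k := by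
          apply mul_le_mul_of_nonneg_left hlog (by positivity)
    obtain ⟨n, hNn, hcount⟩ := maynard_tao m' (le_max_left _ _) B hBadm hsize N
    refine ⟨n, hNn, ?_⟩
    set S : Set (ℕ × ℤ) := {q : ℕ × ℤ | q.1.Prime ∧ q.2 ∈ Set.range a ∧ n = (q.1 : ℤ) + q.2}
      with hS
    -- S is finite
    have hSfin : S.Finite := by
      apply Set.Finite.of_finite_image (f := Prod.fst)
      · apply (Set.finite_Iic ((n - a 0).toNat)).subset
        rintro x ⟨q, hq, rfl⟩
        obtain ⟨hqp, ⟨i, hi⟩, hqn⟩ := hq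
        have h0 : a 0 ≤ q.2 := hi ▸ ha.monotone (Nat.zero_le i)
        simp only [Set.mem_Iic]
        omega
      · rintro q hq q' hq' hfst
        obtain ⟨-, -, h1⟩ := hq
        obtain ⟨-, -, h2⟩ := hq'
        have : q.2 = q'.2 := by omega
        exact Prod.ext hfst this
    -- build a finset of representations
    set g : ℤ → ℕ × ℤ := fun b =>
      (if h : ∃ p : ℕ, p.Prime ∧ n + b = (p : ℤ) then h.choose else 0, -b) with hg
    have hginj : Function.Injective g := by
      intro x y hxy
      have := congrArg Prod.snd hxy
      simpa [hg] using this
    set F : Finset (ℕ × ℤ) :=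
      (B.filter (fun b => ∃ p : ℕ, p.Prime ∧ n + b = (p : ℤ))).image g with hF
    have hFsub : ↑F ⊆ S := by
      intro q hq
      simp only [hF, Finset.coe_image, Set.mem_image, Finset.mem_coe, Finset.mem_filter] at hq
      obtain ⟨b, ⟨hbB, hbP⟩, rfl⟩ := hq
      have hspec := hbP.choose_spec
      refine ⟨?_, ?_, ?_⟩
      · simp only [hg, dif_pos hbP]; exact hspec.1
      · simp only [hg]; exact hBneg b hbB
      · simp only [hg, dif_pos hbP]
        have := hspec.2
        omega
    have hFcard : m ≤ F.card := by
      rw [hF, Finset.card_image_of_injective _ hginj]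
      exact le_trans (le_max_right 2 m) hcount
    have : m ≤ S.ncard := by
      calc m ≤ F.card := hFcard
        _ = (↑F : Set (ℕ × ℤ)).ncard := (Set.ncard_coe_finset F).symm
        _ ≤ S.ncard := Set.ncard_le_ncard hFsub hSfin
    show (m : ℕ∞) ≤ (S.ncard : ℕ∞)
    exact_mod_cast this
  have H : ∀ m : ℕ, (m : ℕ∞) ≤ Filter.limsup f Filter.atTop := by
    intro m
    apply le_limsup_of_frequently_le'
    rw [Filter.frequently_atTop]
    intro N
    obtain ⟨n, h1, h2⟩ := key m (N + 1)
    exact ⟨n, by omega, h2⟩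
  by_contra hne
  obtain ⟨kk, hkk⟩ := WithTop.ne_top_iff_exists.mp hne
  have h1 := H (kk + 1)
  rw [← hkk] at h1
  have h2 : ((kk + 1 : ℕ) : ℕ∞) ≤ (kk : ℕ∞) := h1
  have := (Nat.cast_le (α := ℕ∞)).mp h2
  omega
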